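/- For every real number x > 0, letting g(x) = x - ln(1+x), the strict inequalities (2/3)·g(x) < x - √(2·g(x)) < g(x) hold. -/

import Mathlib

open Real

private lemma exp_quad_lt {y : ℝ} (hy : 0 < y) : 1 + y + y ^ 2 / 2 < Real.exp y := by
  have h := Real.sum_le_exp_of_nonneg hy.le 4
  have hs : ∑ i ∈ Finset.range 4, y ^ i / (Nat.factorial i) =
      1 + y + y ^ 2 / 2 + y ^ 3 / 6 := by
    simp [Finset.sum_range_succ, Nat.factorial]
  rw [hs] at h
  nlinarith [pow_pos hy 3]

private lemma log_lower {x : ℝ} (hx : 0 < x) :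
    8 * x * (x ^ 2 + 3 * x + 3) / (3 * (x + 2) ^ 3) < Real.log (1 + x) := by
  set f : ℝ → ℝ := fun t => Real.log (1 + t) - 8 * t * (t ^ 2 + 3 * t + 3) / (3 * (t + 2) ^ 3)
    with hf
  have hderiv : ∀ t ∈ Set.Ici (0 : ℝ), HasDerivAt f (t ^ 4 / ((1 + t) * (t + 2) ^ 4)) t := by
    intro t ht
    have ht0 : (0 : ℝ) ≤ t := ht
    have h1t : (0 : ℝ) < 1 + t := by linarith
    have h2t : (0 : ℝ) < t + 2 := by linarith
    have hlog : HasDerivAt (fun t : ℝ => Real.log (1 + t)) (1 / (1 + t)) t := by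
      have := ((hasDerivAt_id t).const_add 1).log h1t.ne'
      simpa using this
    have hnum : HasDerivAt (fun t : ℝ => 8 * t * (t ^ 2 + 3 * t + 3))
        (24 * t ^ 2 + 48 * t + 24) t := by
      have : HasDerivAt (fun t : ℝ => 8 * t ^ 3 + 24 * t ^ 2 + 24 * t)
          (8 * (3 * t ^ 2) + 24 * (2 * t) + 24) t := by
        exact (((hasDerivAt_pow 3 t).const_mul 8).add ((hasDerivAt_pow 2 t).const_mul
          24)).add ((hasDerivAt_id t).const_mul 24) |>.congr_deriv (by ring)
      exact this.congr_deriv (by ring) |>.congr_of_eventuallyEq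
        (Filter.Eventually.of_forall fun s => by ring)
    have hden : HasDerivAt (fun t : ℝ => 3 * (t + 2) ^ 3) (9 * (t + 2) ^ 2) t := by
      have h := (((hasDerivAt_id t).add_const 2).pow 3).const_mul 3
      simp only [id_eq] at h
      exact h.congr_deriv (by push_cast; ring)
    have hq : HasDerivAt (fun t : ℝ => 8 * t * (t ^ 2 + 3 * t + 3) / (3 * (t + 2) ^ 3))
        (((24 * t ^ 2 + 48 * t + 24) * (3 * (t + 2) ^ 3) -
          8 * t * (t ^ 2 + 3 * t + 3) * (9 * (t + 2) ^ 2)) / (3 * (t + 2) ^ 3) ^ 2) t :=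
      hnum.div hden (by positivity)
    have := hlog.sub hq
    refine this.congr_deriv ?_
    field_simp
    ring
  have hmono : StrictMonoOn f (Set.Ici (0 : ℝ)) := by
    apply strictMonoOn_of_deriv_pos (convex_Ici 0)
    · exact fun t ht => (hderiv t ht).continuousAt.continuousWithinAt
    · intro t ht
      rw [interior_Ici] at ht
      have h1t : (0 : ℝ) < 1 + t := by have : (0:ℝ) < t := ht; linarith
      have h2t : (0 : ℝ) < t + 2 := by have : (0:ℝ) < t := ht; linarith
      have ht' : (0:ℝ) < t := ht
      rw [(hderiv t (Set.mem_Ici.mpr ht'.le)).deriv]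
      positivity
  have h := hmono (Set.self_mem_Ici) (Set.mem_Ici.mpr hx.le) hx
  have hf0 : f 0 = 0 := by simp [hf]
  rw [hf0] at h
  simp only [hf] at h
  linarith

theorem lemma_two (x : ℝ) (hx : 0 < x) :
    2 / 3 * (x - Real.log (1 + x)) < x - Real.sqrt (2 * (x - Real.log (1 + x))) ∧
    x - Real.sqrt (2 * (x - Real.log (1 + x))) < x - Real.log (1 + x) := by
  set L := Real.log (1 + x) with hL
  have h1x : (1 : ℝ) < 1 + x := by linarith
  have hL0 : 0 < L := Real.log_pos h1x
  have hLx : L < x := by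
    have := Real.log_lt_sub_one_of_pos (by linarith : (0:ℝ) < 1 + x) (by linarith)
    linarith
  have hg : 0 < x - L := by linarith
  constructor
  · -- left: sqrt (2*(x-L)) < x - 2/3*(x-L) = (x + 2L)/3
    have hy : (0 : ℝ) < (x + 2 * L) / 3 := by positivity
    have hφ := log_lower hx
    have hden : (0 : ℝ) < 3 * (x + 2) ^ 3 := by positivity
    rw [div_lt_iff₀ hden] at hφ
    have hsq : 2 * (x - L) < ((x + 2 * L) / 3) ^ 2 := by
      nlinarith [sq_nonneg (x + 2), sq_nonneg x, mul_pos hL0 (pow_pos (by linarith : (0:ℝ) < x + 2) 3), sq_nonneg (x*L), sq_nonneg (x^2), mul_pos hx hL0]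
    have := (Real.sqrt_lt' hy).mpr hsq
    linarith
  · -- right: L < sqrt (2*(x-L))
    have hs : Real.sqrt (1 + 2 * x) ^ 2 = 1 + 2 * x := Real.sq_sqrt (by linarith)
    have hs1 : 1 < Real.sqrt (1 + 2 * x) :=
      (Real.lt_sqrt (by norm_num)).mpr (by nlinarith)
    set y := Real.sqrt (1 + 2 * x) - 1 with hyd
    have hy0 : 0 < y := by simp [hyd]; linarith
    have hval : 1 + y + y ^ 2 / 2 = 1 + x := by
      have : y ^ 2 = (Real.sqrt (1 + 2*x))^2 - 2 * Real.sqrt (1+2*x) + 1 := by rw [hyd]; ring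
      rw [this, hs]; rw [hyd]; ring
    have hexp : Real.exp L < Real.exp y := by
      rw [hL, Real.exp_log (by linarith : (0:ℝ) < 1 + x)]
      calc 1 + x = 1 + y + y ^ 2 / 2 := hval.symm
        _ < Real.exp y := exp_quad_lt hy0
    have hLy : L < y := by exact_mod_cast Real.exp_lt_exp.mp hexp
    have hsq : L ^ 2 < 2 * (x - L) := by
      have h1 : L + 1 < Real.sqrt (1 + 2 * x) := by rw [hyd] at hLy; linarith
      have h2 : (L + 1) ^ 2 < (Real.sqrt (1 + 2 * x)) ^ 2 := by
        apply sq_lt_sq' <;> nlinarith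
      rw [hs] at h2
      nlinarith
    have := (Real.lt_sqrt hL0.le).mpr hsq
    linarith
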